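/- Let X and Y be unitary d × d matrices with X² = Y² = 1, and let Z₀ = (Y + XYX)/2. Then Z₀ is self-adjoint, Z₀ commutes with X, ‖Z₀² − 1‖ ≤ (1/2)·‖XY − YX‖, and ‖Y − Z₀‖ = (1/2)·‖XY − YX‖, where ‖·‖ is the normalized Hilbert–Schmidt norm. -/

import Mathlib

open Matrix

noncomputable def normHS {n : Type*} [Fintype n] (A : Matrix n n ℂ) : ℝ :=
  Real.sqrt ((Matrix.trace (Aᴴ * A)).re / Fintype.card n)

lemma trace_re_nonneg {n : Type*} [Fintype n] (M : Matrix n n ℂ) :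
    0 ≤ (Matrix.trace (Mᴴ * M)).re := by
  simp only [Matrix.trace, Matrix.diag, Matrix.mul_apply, Matrix.conjTranspose_apply,
    Complex.re_sum]
  refine Finset.sum_nonneg fun j _ => Finset.sum_nonneg fun i _ => ?_
  rw [Complex.star_def, Complex.conj_mul', ← Complex.ofReal_pow, Complex.ofReal_re]
  positivity

lemma normHS_smul {n : Type*} [Fintype n] (c : ℂ) (A : Matrix n n ℂ) :
    normHS (c • A) = ‖c‖ * normHS A := by
  unfold normHS
  rw [conjTranspose_smul, Matrix.smul_mul, Matrix.mul_smul, smul_smul, trace_smul]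
  have h1 : star c * c = ((‖c‖ ^ 2 : ℝ) : ℂ) := by
    rw [Complex.star_def, Complex.conj_mul']
    norm_cast
  rw [h1, smul_eq_mul, Complex.re_ofReal_mul, mul_div_assoc,
    Real.sqrt_mul (by positivity), Real.sqrt_sq (norm_nonneg c)]

lemma normHS_unit_mul {n : Type*} [Fintype n] [DecidableEq n] (U A : Matrix n n ℂ)
    (h : Uᴴ * U = 1) : normHS (U * A) = normHS A := by
  unfold normHS
  rw [conjTranspose_mul, Matrix.mul_assoc, ← Matrix.mul_assoc Uᴴ U A, h, Matrix.one_mul]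

theorem stmt_4 (d : ℕ) (X Y : Matrix (Fin d) (Fin d) ℂ)
    (hXu : X ∈ Matrix.unitaryGroup (Fin d) ℂ)
    (hYu : Y ∈ Matrix.unitaryGroup (Fin d) ℂ)
    (hXi : X ^ 2 = 1) (hYi : Y ^ 2 = 1)
    (Z₀ : Matrix (Fin d) (Fin d) ℂ) (hZ₀ : Z₀ = ((1 : ℂ) / 2) • (Y + X * Y * X)) :
    Z₀ᴴ = Z₀ ∧ Commute Z₀ X ∧
    normHS (Z₀ ^ 2 - 1) ≤ (1 / 2) * normHS (X * Y - Y * X) ∧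
    normHS (Y - Z₀) = (1 / 2) * normHS (X * Y - Y * X) := by
  have hX2 : X * X = 1 := by rw [← pow_two]; exact hXi
  have hY2 : Y * Y = 1 := by rw [← pow_two]; exact hYi
  have hX : Xᴴ = X := by
    have h := hXu.1
    rw [Matrix.star_eq_conjTranspose] at h
    calc Xᴴ = Xᴴ * (X * X) := by rw [hX2, Matrix.mul_one]
    _ = (Xᴴ * X) * X := by rw [Matrix.mul_assoc]
    _ = X := by rw [h, Matrix.one_mul]
  have hY : Yᴴ = Y := by
    have h := hYu.1
    rw [Matrix.star_eq_conjTranspose] at h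
    calc Yᴴ = Yᴴ * (Y * Y) := by rw [hY2, Matrix.mul_one]
    _ = (Yᴴ * Y) * Y := by rw [Matrix.mul_assoc]
    _ = Y := by rw [h, Matrix.one_mul]
  have hXl : ∀ M : Matrix (Fin d) (Fin d) ℂ, X * (X * M) = M := fun M => by
    rw [← Matrix.mul_assoc, hX2, Matrix.one_mul]
  have hYl : ∀ M : Matrix (Fin d) (Fin d) ℂ, Y * (Y * M) = M := fun M => by
    rw [← Matrix.mul_assoc, hY2, Matrix.one_mul]
  set A := X * Y - Y * X with hA
  have hAstar : Aᴴ = -A := by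
    simp only [hA, conjTranspose_sub, conjTranspose_mul, hX, hY]
    abel
  -- Z₀ self-adjoint
  have hsa : Z₀ᴴ = Z₀ := by
    rw [hZ₀]
    simp only [conjTranspose_smul, conjTranspose_add, conjTranspose_mul, hX, hY]
    congr 1
    · simp
    · rw [Matrix.mul_assoc]
  -- commutes
  have hcomm : Commute Z₀ X := by
    rw [Commute, SemiconjBy, hZ₀]
    rw [Matrix.smul_mul, Matrix.mul_smul]
    congr 1
    rw [Matrix.add_mul, Matrix.mul_add]
    rw [Matrix.mul_assoc (X*Y) X X, hX2, Matrix.mul_one,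
      ← Matrix.mul_assoc X (X*Y) X, ← Matrix.mul_assoc X X Y, hX2, Matrix.one_mul]
    abel
  refine ⟨hsa, hcomm, ?_, ?_⟩
  · -- inequality
    have key : (Y + X*Y*X) * (Y + X*Y*X) = A * A + (4:ℂ) • 1 := by
      rw [hA]
      simp only [Matrix.add_mul, Matrix.mul_add, Matrix.sub_mul, Matrix.mul_sub,
        Matrix.mul_assoc, hXl, hYl, hX2, hY2, Matrix.mul_one]
      module
    have e2 : Z₀ ^ 2 - 1 = ((1 : ℂ)/4) • (A ^ 2) := by
      rw [hZ₀, smul_pow, pow_two, pow_two, key, smul_add, smul_smul]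
      norm_num
      rw [pow_two]
    set B := Aᴴ * A with hB
    set C := (1 : Matrix (Fin d) (Fin d) ℂ) + (X*Y)*(X*Y) with hC
    have hCC : C * Cᴴ = (4:ℂ) • 1 - B := by
      rw [hC, hB, hAstar, hA]
      simp only [conjTranspose_add, conjTranspose_mul, conjTranspose_one, hX, hY]
      simp only [Matrix.add_mul, Matrix.mul_add, Matrix.sub_mul, Matrix.mul_sub,
        Matrix.neg_mul, Matrix.one_mul, Matrix.mul_one,
        Matrix.mul_assoc, hXl, hYl, hX2, hY2]
      module
    have htr : (Matrix.trace (B * B)).re ≤ 4 * (Matrix.trace B).re := by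
      have h0 : 0 ≤ (Matrix.trace ((A*C)ᴴ * (A*C))).re := trace_re_nonneg _
      have heq : Matrix.trace ((A*C)ᴴ * (A*C)) = Matrix.trace (B * ((4:ℂ) • 1 - B)) := by
        rw [conjTranspose_mul, Matrix.mul_assoc, ← Matrix.mul_assoc Aᴴ A C, ← hB,
          Matrix.trace_mul_comm, Matrix.mul_assoc, hCC]
      have heq2 : Matrix.trace (B * ((4:ℂ) • 1 - B)) = (4:ℂ) * Matrix.trace B
          - Matrix.trace (B*B) := by
        rw [Matrix.mul_sub, Matrix.mul_smul, Matrix.mul_one, trace_sub, trace_smul, smul_eq_mul]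
      rw [heq, heq2] at h0
      have h4 : ((4:ℂ) * Matrix.trace B - Matrix.trace (B*B)).re
          = 4 * (Matrix.trace B).re - (Matrix.trace (B*B)).re := by
        simp [Complex.sub_re, Complex.mul_re]
      rw [h4] at h0; linarith
    rw [e2, normHS_smul]
    have habs : ‖((1:ℂ)/4)‖ = 1/4 := by
      rw [show ((1:ℂ)/4) = (((1/4 : ℝ)) : ℂ) by norm_num, Complex.norm_real, Real.norm_eq_abs]
      norm_num
    rw [habs]
    have hle : normHS (A^2) ≤ 2 * normHS A := by
      have hA2 : (A^2)ᴴ * (A^2) = B * B := by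
        rw [pow_two, conjTranspose_mul, hAstar, hB, hAstar]
        simp [Matrix.neg_mul, Matrix.mul_neg, Matrix.mul_assoc]
      unfold normHS
      rw [hA2, ← hB]
      rw [show (2:ℝ) = Real.sqrt 4 by
        rw [show (4:ℝ) = 2^2 by norm_num, Real.sqrt_sq (by norm_num)],
        ← Real.sqrt_mul (by norm_num)]
      apply Real.sqrt_le_sqrt
      rw [← mul_div_assoc, div_eq_mul_inv, div_eq_mul_inv]
      exact mul_le_mul_of_nonneg_right htr (by positivity)
    have h0 : 0 ≤ normHS A := Real.sqrt_nonneg _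
    linarith
  · -- equality
    have e1 : Y - Z₀ = ((1 : ℂ)/2) • (X * A) := by
      rw [hZ₀, hA, Matrix.mul_sub, hXl, ← Matrix.mul_assoc]
      module
    rw [e1, normHS_smul, normHS_unit_mul X A (by rw [hX, hX2])]
    have habs : ‖((1:ℂ)/2)‖ = 1/2 := by
      rw [show ((1:ℂ)/2) = (((1/2 : ℝ)) : ℂ) by norm_num, Complex.norm_real, Real.norm_eq_abs]
      norm_num
    rw [habs]
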